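/- Let F be a permutation of GF(2^n) agreeing with the inverse function Inv (where Inv(x) = x^{2^n − 2}, so Inv(0) = 0 and Inv(x) = x⁻¹ for x ≠ 0) outside a set P ⊆ GF(2^n) containing 0, and let c ∈ GF(2^n) with c ≠ 1. Then the c-differential uniformity of F is at most |P| + 2. -/

import Mathlib

/-- The number of solutions `x` of `F(x+a) + c·F(x) = b`. -/
noncomputable def cdCount (n : ℕ) (F : GaloisField 2 n → GaloisField 2 n)
    (c a b : GaloisField 2 n) : ℕ :=
  Nat.card {x : GaloisField 2 n // F (x + a) + c * F x = b}

/-- The `c`-differential uniformity of `F` (requiring `a ≠ 0` only when `c = 1`). -/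
noncomputable def cdu (n : ℕ) (F : GaloisField 2 n → GaloisField 2 n)
    (c : GaloisField 2 n) : ℕ :=
  sSup {k : ℕ | ∃ a b : GaloisField 2 n, (c = 1 → a ≠ 0) ∧ k = cdCount n F c a b}

open Polynomial in
theorem cdCount_le (n : ℕ) (F : GaloisField 2 n → GaloisField 2 n)
    (hF : Function.Bijective F)
    (P : Finset (GaloisField 2 n)) (h0 : (0 : GaloisField 2 n) ∈ P)
    (hFInv : ∀ x ∉ P, F x = x⁻¹)
    (c : GaloisField 2 n) (hc : c ≠ 1) (a b : GaloisField 2 n) :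
    cdCount n F c a b ≤ P.card + 2 := by
  classical
  haveI : Fintype (GaloisField 2 n) := Fintype.ofFinite _
  have h2 : (2 : GaloisField 2 n) = 0 := CharTwo.two_eq_zero
  have hc1 : (1 : GaloisField 2 n) + c ≠ 0 := by
    intro h
    exact hc (by rw [eq_neg_of_add_eq_zero_right h, CharTwo.neg_eq])
  rw [cdCount, Nat.card_eq_fintype_card, Fintype.card_subtype]
  set T : Finset (GaloisField 2 n) := Finset.univ.filter (fun x => F (x + a) + c * F x = b) with hT
  have hmemT : ∀ x, x ∈ T ↔ F (x + a) + c * F x = b := by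
    intro x; simp [hT]
  set Q : GaloisField 2 n → Prop := fun x => x ∈ P ∨ x + a ∈ P with hQ
  have hsplit := Finset.card_filter_add_card_filter_not (s := T) (p := Q)
  -- solutions touching P inject into P
  have hcard1 : (T.filter Q).card ≤ P.card := by
    apply Finset.card_le_card_of_injOn (fun x => if x ∈ P then x else x + a)
    · intro x hx
      rw [Finset.mem_coe, Finset.mem_filter] at hx
      rcases hx.2 with h | h
      · simp [h]
      · by_cases hxP : x ∈ P <;> simp [hxP, h]
    · intro x hx y hy hxy
      rw [Finset.coe_filter, Set.mem_setOf_eq] at hx hy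
      have Ex := (hmemT x).mp hx.1
      have Ey := (hmemT y).mp hy.1
      -- helper: two solutions x and x+a with x+a=y force a = 0
      have key : ∀ u v : GaloisField 2 n, v = u + a → F (u + a) + c * F u = b →
          F (v + a) + c * F v = b → a = 0 := by
        intro u v hv Eu Ev
        have hva : v + a = u := by
          rw [hv, add_assoc]
          have : a + a = 0 := by
            have := CharTwo.add_self_eq_zero (R := GaloisField 2 n) a
            exact this
          rw [this, add_zero]
        rw [hva, hv] at Ev
        -- Eu : F (u+a) + c * F u = b,  Ev : F u + c * F (u+a) = b
        have hsum : (1 + c) * (F (u + a) + F u) = b + b := by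
          linear_combination Eu + Ev
        rw [CharTwo.add_self_eq_zero] at hsum
        have hFF : F (u + a) + F u = 0 := by
          rcases mul_eq_zero.mp hsum with h | h
          · exact absurd h hc1
          · exact h
        have : F (u + a) = F u := by
          have := eq_neg_of_add_eq_zero_left hFF
          rwa [CharTwo.neg_eq] at this
        have : u + a = u := hF.injective this
        exact add_eq_left.mp this
      by_cases hxP : x ∈ P <;> by_cases hyP : y ∈ P
      · simpa [hxP, hyP] using hxy
      · -- x ∈ P, y ∉ P : hxy : x = y + a
        simp only [hxP, hyP, if_true, if_false] at hxy
        have ha : a = 0 := key y x hxy Ey Ex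
        rw [ha, add_zero] at hxy
        exact absurd (hxy ▸ hxP) hyP
      · simp only [hxP, hyP, if_true, if_false] at hxy
        have ha : a = 0 := key x y hxy.symm Ex Ey
        rw [ha, add_zero] at hxy
        exact absurd (hxy ▸ hyP) hxP
      · simpa [hxP, hyP] using hxy
  -- solutions avoiding P are roots of a nonzero quadratic
  have hcard2 : (T.filter fun x => ¬ Q x).card ≤ 2 := by
    set q : (GaloisField 2 n)[X] := C b * X ^ 2 + C (a * b + 1 + c) * X + C (c * a) with hq
    have hq0 : q ≠ 0 := by
      intro h
      have hb : b = 0 := by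
        have := congrArg (fun p => Polynomial.coeff p 2) h
        simpa [hq, coeff_add, coeff_C_mul, coeff_C, coeff_X, coeff_X_pow, coeff_one] using this
      have h1 : a * b + 1 + c = 0 := by
        have := congrArg (fun p => Polynomial.coeff p 1) h
        simpa [hq, coeff_add, coeff_C_mul, coeff_C, coeff_X, coeff_X_pow, coeff_one] using this
      rw [hb, mul_zero, zero_add] at h1
      exact hc1 h1
    have hsub : (T.filter fun x => ¬ Q x) ⊆ q.roots.toFinset := by
      intro x hx
      rw [Finset.mem_filter] at hx
      have hxP : x ∉ P := fun h => hx.2 (Or.inl h)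
      have hxaP : x + a ∉ P := fun h => hx.2 (Or.inr h)
      have hx0 : x ≠ 0 := fun h => hxP (h ▸ h0)
      have hxa0 : x + a ≠ 0 := fun h => hxaP (h ▸ h0)
      have heq : (x + a)⁻¹ + c * x⁻¹ = b := by
        have := (hmemT x).mp hx.1
        rwa [hFInv x hxP, hFInv (x + a) hxaP] at this
      field_simp at heq
      -- heq : x + c * (x + a) = b * ((x + a) * x)
      rw [Multiset.mem_toFinset, mem_roots hq0]
      show q.eval x = 0
      simp only [hq, eval_add, eval_mul, eval_pow, eval_C, eval_X]
      linear_combination heq + (b * x ^ 2 + a * b * x) * h2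
    calc (T.filter fun x => ¬ Q x).card ≤ q.roots.toFinset.card :=
          Finset.card_le_card hsub
      _ ≤ Multiset.card q.roots := Multiset.toFinset_card_le _
      _ ≤ q.natDegree := q.card_roots'
      _ ≤ 2 := natDegree_quadratic_le
  omega

theorem stmt_4 (n : ℕ) (F : GaloisField 2 n → GaloisField 2 n)
    (hF : Function.Bijective F)
    (P : Finset (GaloisField 2 n)) (h0 : (0 : GaloisField 2 n) ∈ P)
    (hFInv : ∀ x ∉ P, F x = x⁻¹)
    (c : GaloisField 2 n) (hc : c ≠ 1) :
    cdu n F c ≤ P.card + 2 := by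
  apply csSup_le
  · exact ⟨cdCount n F c 0 0, 0, 0, fun h => absurd h hc, rfl⟩
  · rintro k ⟨a, b, -, rfl⟩
    exact cdCount_le n F hF P h0 hFInv c hc a b
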